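/- Let G be a graph on n vertices with adjacency matrix A, and let φ(x) = xⁿ + c₁x^{n-1} + ⋯ + c_{n-1}x + c_n be the characteristic polynomial of A. Then for every odd index i ∈ {1, ..., n}, the coefficient c_i is even. -/

import Mathlib

open Polynomial Matrix Finset Equiv

section aux

variable {n : ℕ} (G : SimpleGraph (Fin n)) [DecidableRel G.Adj]

private lemma adj_symm_entry (a b : Fin n) :
    G.adjMatrix (ZMod 2) a b = G.adjMatrix (ZMod 2) b a := by
  simp [SimpleGraph.adjMatrix_apply, SimpleGraph.adj_comm]

private lemma charm_symm (a b : Fin n) :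
    charmatrix (G.adjMatrix (ZMod 2)) a b = charmatrix (G.adjMatrix (ZMod 2)) b a := by
  rcases eq_or_ne a b with rfl | h
  · rfl
  · rw [charmatrix_apply_ne _ _ _ h, charmatrix_apply_ne _ _ _ h.symm, adj_symm_entry]

/-- For an involution `σ`, the corresponding term of the determinant expansion of the
characteristic matrix has zero coefficient in degree `n - i` for odd `i ≤ n`. -/
private lemma term_coeff_zero {i : ℕ} (h1 : 1 ≤ i) (h2 : i ≤ n) (hodd : Odd i)
    (σ : Equiv.Perm (Fin n)) (hσ : σ⁻¹ = σ) :
    (∏ j, charmatrix (G.adjMatrix (ZMod 2)) (σ j) j).coeff (n - i) = 0 := by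
  set M := charmatrix (G.adjMatrix (ZMod 2)) with hM
  have hsplit : (Finset.univ : Finset (Fin n)) =
      σ.support ∪ σ.supportᶜ := by simp
  have hprod : (∏ j, M (σ j) j) =
      (∏ j ∈ σ.supportᶜ, M (σ j) j) * (∏ j ∈ σ.support, M (σ j) j) := by
    rw [← Finset.prod_mul_prod_compl σ.support, mul_comm]
  have hfix : (∏ j ∈ σ.supportᶜ, M (σ j) j) = X ^ (σ.supportᶜ.card) := by
    rw [Finset.prod_congr rfl (fun j hj => ?_), Finset.prod_const]
    have hjj : σ j = j := by
      simpa [Equiv.Perm.mem_support] using (Finset.mem_compl.mp hj)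
    rw [hjj, hM, charmatrix_apply_eq]
    simp
  have hmov : (∏ j ∈ σ.support, M (σ j) j) =
      C (∏ j ∈ σ.support, -(G.adjMatrix (ZMod 2) (σ j) j)) := by
    rw [map_prod]
    refine Finset.prod_congr rfl (fun j hj => ?_)
    have hne : σ j ≠ j := Equiv.Perm.mem_support.mp hj
    rw [hM, charmatrix_apply_ne _ _ _ hne, map_neg]
  rw [hprod, hfix, hmov, mul_comm, coeff_C_mul, coeff_X_pow]
  have hcard : σ.support.card + σ.supportᶜ.card = n := by
    have h := Finset.card_add_card_compl σ.support
    rwa [Fintype.card_fin] at h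
  have hdvd : 2 ∣ σ.support.card := by
    refine Equiv.Perm.two_dvd_card_support ?_
    have h : σ⁻¹ * σ = 1 := inv_mul_cancel σ
    rw [hσ] at h
    rwa [sq]
  have hne : n - i ≠ σ.supportᶜ.card := by
    intro h
    obtain ⟨k, hk⟩ := hdvd
    obtain ⟨m, hm⟩ := hodd
    omega
  simp [hne]

private lemma term_symm (σ : Equiv.Perm (Fin n)) :
    (∏ j, charmatrix (G.adjMatrix (ZMod 2)) (σ⁻¹ j) j) =
    (∏ j, charmatrix (G.adjMatrix (ZMod 2)) (σ j) j) := by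
  have := Equiv.prod_comp σ
    (fun j => charmatrix (G.adjMatrix (ZMod 2)) (σ⁻¹ j) j)
  rw [← this]
  refine Finset.prod_congr rfl (fun j _ => ?_)
  rw [show σ⁻¹ (σ j) = j from σ.symm_apply_apply j]
  exact charm_symm G j (σ j)

private lemma key (i : ℕ) (h1 : 1 ≤ i) (h2 : i ≤ n) (hodd : Odd i) :
    (Matrix.charpoly (G.adjMatrix (ZMod 2))).coeff (n - i) = 0 := by
  rw [Matrix.charpoly, Matrix.det_apply, Polynomial.finset_sum_coeff]
  refine Finset.sum_ninvolution (fun σ => σ⁻¹) ?_ ?_ (fun _ => Finset.mem_univ _)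
    (fun σ => inv_inv σ)
  · intro σ
    have hterm : (Equiv.Perm.sign σ⁻¹ •
        ∏ j, charmatrix (G.adjMatrix (ZMod 2)) (σ⁻¹ j) j) =
        (Equiv.Perm.sign σ • ∏ j, charmatrix (G.adjMatrix (ZMod 2)) (σ j) j) := by
      rw [term_symm, Equiv.Perm.sign_inv]
    rw [hterm]
    exact CharTwo.add_self_eq_zero _
  · intro σ hne hinv
    apply hne
    have := term_coeff_zero G h1 h2 hodd σ hinv
    rcases Int.units_eq_one_or (Equiv.Perm.sign σ) with hs | hs <;>
      rw [hs] <;> simp [this]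

end aux

theorem stmt4 (n : ℕ) (G : SimpleGraph (Fin n)) [DecidableRel G.Adj] (i : ℕ)
    (h1 : 1 ≤ i) (h2 : i ≤ n) (hodd : Odd i) :
    (2 : ℤ) ∣ (Matrix.charpoly (G.adjMatrix ℤ)).coeff (n - i) := by
  have hmap : (G.adjMatrix ℤ).map (Int.castRingHom (ZMod 2)) = G.adjMatrix (ZMod 2) := by
    ext a b
    simp [SimpleGraph.adjMatrix_apply, apply_ite (Int.castRingHom (ZMod 2))]
  have h := key G i h1 h2 hodd
  rw [← hmap, Matrix.charpoly_map, Polynomial.coeff_map] at h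
  exact (ZMod.intCast_zmod_eq_zero_iff_dvd _ 2).mp h
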